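/- Let f : E → ℝ be convex with a sharp minimum at x⋆ (0 ∈ int ∂f(x⋆)), and suppose g ≠ 0 lies in the neighborhood of 0 on which f* is linear (f*(g') = g'·x⋆ − f(x⋆)). Then ∂f*(g; g) = g·x⋆ = ∂f*(0; g), so the estimate f*(0) − ξ' ≤ ∂f*(g; g) − ∂f*(0; g) forces ξ' = f*(0); i.e., the conjugate epi-projection algorithm terminates finitely once its projected gradient g_p^k enters this neighborhood. -/

import Mathlib

open scoped RealInnerProductSpace
open Filter

variable {E : Type*} [NormedAddCommGroup E] [InnerProductSpace ℝ E] [FiniteDimensional ℝ E]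

/-- Fenchel conjugate `f*(g) = sup_x (g·x - f x)` (real-valued supremum). -/
noncomputable def conj (f : E → ℝ) (g : E) : ℝ := ⨆ x, (⟪g, x⟫ - f x)

/-- Subdifferential of a finite convex function. -/
def subdiff (f : E → ℝ) (x : E) : Set E := {g | ∀ y, f y - f x ≥ ⟪g, y - x⟫}

/-- Epigraph of the conjugate function: `{(μ, g) : μ ≥ f*(g)}` (including the
domain condition, correct even where `f* = +∞`). -/
def epiConj (f : E → ℝ) : Set (ℝ × E) := {p | ∀ x, ⟪p.2, x⟫ - f x ≤ p.1}

/-- Subdifferential of the conjugate `f*` at `g₀`: `x` with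
`f*(g) ≥ f*(g₀) + x·(g - g₀)` for all `g` (stated via upper bounds `μ ≥ f*(g)`). -/
def subdiffConj (f : E → ℝ) (g₀ : E) : Set E :=
  {x | ∀ p ∈ epiConj f, p.1 - conj f g₀ ≥ ⟪x, p.2 - g₀⟫}

/-- Directional derivative of the conjugate: `∂f*(g₀; d) = sup_{x ∈ ∂f*(g₀)} x·d`. -/
noncomputable def dirDConj (f : E → ℝ) (g₀ d : E) : ℝ :=
  sSup ((fun x => ⟪x, d⟫) '' subdiffConj f g₀)

/-- Directional derivative of a finite convex function `h`:
`∂h(g; d) = sup_{x ∈ ∂h(g)} x·d`. -/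
noncomputable def dirD (h : E → ℝ) (g d : E) : ℝ :=
  sSup ((fun x => ⟪x, d⟫) '' subdiff h g)

/-- under a sharp minimum, once g ≠ 0 lies in the ball where f*
is linear, ∂f*(g; g) = g·x⋆ = ∂f*(0; g), and the progress estimate forces
finite termination ξ' = f*(0). -/
theorem finite_termination_of_sharp_min
    (f : E → ℝ) (hf : ConvexOn ℝ Set.univ f) (xs : E)
    (hsharp : (0 : E) ∈ interior (subdiff f xs))
    (ρ : ℝ) (hρ : 0 < ρ)
    (hlin : ∀ g : E, ‖g‖ < ρ → conj f g = ⟪g, xs⟫ - f xs)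
    (g : E) (hg : g ≠ 0) (hgρ : ‖g‖ < ρ) :
    dirDConj f g g = ⟪g, xs⟫ ∧ dirDConj f 0 g = ⟪g, xs⟫ ∧
      ∀ ξ' : ℝ, ξ' ≤ conj f 0 →
        conj f 0 - ξ' ≤ dirDConj f g g - dirDConj f 0 g → ξ' = conj f 0 := by
  have hg0 : (0:ℝ) < ‖g‖ := norm_pos_iff.mpr hg
  obtain ⟨ε, hε, hball⟩ : ∃ ε > 0, Metric.ball (0:E) ε ⊆ subdiff f xs := by
    rw [mem_interior_iff_mem_nhds] at hsharp
    exact Metric.mem_nhds_iff.mp hsharp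
  -- subgradients at xs give honest points of the conjugate epigraph
  have hEpi : ∀ h : E, h ∈ subdiff f xs → ((⟪h, xs⟫ - f xs, h) : ℝ × E) ∈ epiConj f := by
    intro h hh x
    have h1 := hh x
    rw [inner_sub_right] at h1
    dsimp only
    linarith
  have hρ0 : ‖(0:E)‖ < ρ := by simpa using hρ
  -- xs belongs to every subdiffConj f g₀ on the linearity ball
  have hxsK : ∀ g₀ : E, ‖g₀‖ < ρ → xs ∈ subdiffConj f g₀ := by
    intro g₀ hg₀ p hp
    have h1 := hp xs
    have e1 : ⟪xs, p.2 - g₀⟫ = ⟪p.2, xs⟫ - ⟪g₀, xs⟫ := by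
      rw [inner_sub_right, real_inner_comm xs p.2, real_inner_comm xs g₀]
    rw [hlin g₀ hg₀, e1]
    linarith
  have hconj0 : conj f 0 = - f xs := by
    rw [hlin 0 hρ0, inner_zero_left]; ring
  -- Goal 2: subdiffConj f 0 = {xs}
  have hsub0 : subdiffConj f 0 = {xs} := by
    apply Set.eq_singleton_iff_unique_mem.mpr
    refine ⟨hxsK 0 hρ0, ?_⟩
    intro x hx
    by_contra hne
    have hxs' : (0:ℝ) < ‖x - xs‖ := norm_pos_iff.mpr (sub_ne_zero.mpr hne)
    set u : E := (ε / 2) • (‖x - xs‖⁻¹ • (x - xs)) with hu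
    have hun : ‖u‖ = ε / 2 := by
      rw [hu, norm_smul, norm_smul, norm_inv, norm_norm, Real.norm_eq_abs,
        abs_of_pos (by positivity : (0:ℝ) < ε/2)]
      field_simp
    have huball : u ∈ Metric.ball (0:E) ε := by
      rw [Metric.mem_ball, dist_zero_right, hun]; linarith
    have hp := hx _ (hEpi u (hball huball))
    rw [hconj0] at hp
    simp only [sub_zero] at hp
    have h2 : ⟪x - xs, u⟫ ≤ 0 := by
      have e2 : ⟪x - xs, u⟫ = ⟪x, u⟫ - ⟪xs, u⟫ := inner_sub_left _ _ _
      have h3 : ⟪u, xs⟫ = ⟪xs, u⟫ := real_inner_comm _ _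
      linarith
    have h4 : ⟪x - xs, u⟫ = (ε/2) * ‖x - xs‖ := by
      rw [hu, real_inner_smul_right, real_inner_smul_right,
        real_inner_self_eq_norm_mul_norm]
      field_simp
    rw [h4] at h2
    nlinarith
  have hdir0 : dirDConj f 0 g = ⟪g, xs⟫ := by
    rw [dirDConj, hsub0, Set.image_singleton, csSup_singleton, real_inner_comm]
  -- Goal 1
  have hconjg : conj f g = ⟪g, xs⟫ - f xs := hlin g hgρ
  have hdirg : dirDConj f g g = ⟪g, xs⟫ := by
    by_cases hcase : ∃ τ : ℝ, 0 < τ ∧ ‖(1+τ) • g‖ < ρ ∧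
        BddAbove (Set.range fun y => ⟪(1+τ) • g, y⟫ - f y)
    · -- bounded beyond g : the image is the singleton {⟪g,xs⟫}
      obtain ⟨τ, hτ, hτρ, hbdd⟩ := hcase
      -- upper bound for members of subdiffConj f g
      have hub : ∀ x ∈ subdiffConj f g, ⟪x, g⟫ ≤ ⟪g, xs⟫ := by
        intro x hx
        have hpmem : ((conj f ((1+τ) • g), (1+τ) • g) : ℝ × E) ∈ epiConj f := by
          intro y
          show ⟪(1+τ) • g, y⟫ - f y ≤ conj f ((1+τ) • g)
          unfold conj
          exact le_ciSup hbdd y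
        have h1 := hx _ hpmem
        dsimp only at h1
        rw [hlin _ hτρ, hconjg, real_inner_smul_left] at h1
        have e1 : (1+τ) • g - g = τ • g := by module
        rw [e1, real_inner_smul_right] at h1
        nlinarith
      have hlb : ∀ x ∈ subdiffConj f g, ⟪g, xs⟫ ≤ ⟪x, g⟫ := by
        intro x hx
        obtain ⟨t, ht0, ht1, htε'⟩ : ∃ t : ℝ, 0 < t ∧ t < 1 ∧ t * ‖g‖ < ε := by
          refine ⟨min (1/2) (ε/(2*‖g‖)),
            lt_min (by norm_num) (by positivity),
            lt_of_le_of_lt (min_le_left _ _) (by norm_num), ?_⟩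
          have h5 : min (1/2) (ε/(2*‖g‖)) ≤ ε/(2*‖g‖) := min_le_right _ _
          have h6 : min (1/2) (ε/(2*‖g‖)) * ‖g‖ ≤ (ε/(2*‖g‖)) * ‖g‖ := by nlinarith
          have h7 : (ε/(2*‖g‖)) * ‖g‖ = ε/2 := by field_simp
          linarith
        have htball : t • g ∈ Metric.ball (0:E) ε := by
          rw [Metric.mem_ball, dist_zero_right, norm_smul, Real.norm_eq_abs,
            abs_of_pos ht0]
          exact htε'
        have h1 := hx _ (hEpi _ (hball htball))
        dsimp only at h1
        rw [hconjg, real_inner_smul_left] at h1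
        have e1 : t • g - g = (t-1) • g := by module
        rw [e1, real_inner_smul_right] at h1
        nlinarith
      have himg : (fun x => ⟪x, g⟫) '' subdiffConj f g = {⟪g, xs⟫} := by
        apply Set.eq_singleton_iff_unique_mem.mpr
        constructor
        · exact ⟨xs, hxsK g hgρ, real_inner_comm g xs⟩
        · rintro y ⟨x, hx, rfl⟩
          exact le_antisymm (hub x hx) (hlb x hx)
      rw [dirDConj, himg, csSup_singleton]
    · -- unbounded beyond g : junk values, ⟪g,xs⟫ = 0, and the image is unbounded
      push_neg at hcase
      obtain ⟨T, hT0, hTmul⟩ : ∃ T : ℝ, 0 < T ∧ (1+T) * ‖g‖ = ρ := by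
        refine ⟨ρ/‖g‖ - 1, ?_, ?_⟩
        · have h5 : 1 < ρ/‖g‖ := (one_lt_div hg0).mpr hgρ
          linarith
        · have h5 : 1 + (ρ/‖g‖ - 1) = ρ/‖g‖ := by ring
          rw [h5, div_mul_cancel₀ _ (ne_of_gt hg0)]
      have hnorm : ∀ τ : ℝ, 0 < τ → τ < T → ‖(1+τ) • g‖ < ρ := by
        intro τ h1 h2
        rw [norm_smul, Real.norm_eq_abs, abs_of_pos (by linarith)]
        nlinarith
      have hzero : ∀ τ : ℝ, 0 < τ → τ < T → (1+τ) * ⟪g, xs⟫ - f xs = 0 := by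
        intro τ h1 h2
        have hnb := hcase τ h1 (hnorm τ h1 h2)
        have h3 : conj f ((1+τ) • g) = 0 := Real.iSup_of_not_bddAbove hnb
        rw [hlin _ (hnorm τ h1 h2), real_inner_smul_left] at h3
        linarith
      have hz1 := hzero (T/2) (by linarith) (by linarith)
      have hz2 := hzero (T/4) (by linarith) (by linarith)
      have hc0 : ⟪g, xs⟫ = 0 := by nlinarith
      have hfxs : f xs = 0 := by nlinarith
      -- the (bounded-above) domain of the conjugate
      set D : Set E := {h | BddAbove (Set.range fun y => ⟪h, y⟫ - f y)} with hD
      have hDconv : Convex ℝ D := by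
        intro h₁ h1m h₂ h2m a b ha hb hab
        obtain ⟨M₁, hM₁⟩ := h1m
        obtain ⟨M₂, hM₂⟩ := h2m
        refine ⟨a*M₁ + b*M₂, ?_⟩
        rintro _ ⟨y, rfl⟩
        dsimp only
        have e : ⟪a • h₁ + b • h₂, y⟫ - f y
            = a*(⟪h₁, y⟫ - f y) + b*(⟪h₂, y⟫ - f y) := by
          rw [inner_add_left, real_inner_smul_left, real_inner_smul_left]
          linear_combination (f y) * hab
        have b1 : ⟪h₁, y⟫ - f y ≤ M₁ := hM₁ (Set.mem_range_self y)
        have b2 : ⟪h₂, y⟫ - f y ≤ M₂ := hM₂ (Set.mem_range_self y)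
        rw [e]
        nlinarith
      have hballD : Metric.ball (0:E) ε ⊆ D := by
        intro h hh
        exact ⟨⟪h, xs⟫ - f xs, by rintro _ ⟨y, rfl⟩; exact hEpi h (hball hh) y⟩
      have h0int : (0:E) ∈ interior D :=
        mem_interior.mpr ⟨Metric.ball 0 ε, hballD, Metric.isOpen_ball, Metric.mem_ball_self hε⟩
      have hgni : g ∉ interior D := by
        intro hgi
        obtain ⟨δ, hδ, hδball⟩ := Metric.mem_nhds_iff.mp (mem_interior_iff_mem_nhds.mp hgi)
        obtain ⟨τ, hτ0, hτT, hτδ⟩ : ∃ τ : ℝ, 0 < τ ∧ τ < T ∧ τ * ‖g‖ < δ := by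
          refine ⟨min (T/2) (δ/(2*‖g‖)),
            lt_min (by linarith) (by positivity),
            lt_of_le_of_lt (min_le_left _ _) (by linarith), ?_⟩
          have h5 : min (T/2) (δ/(2*‖g‖)) ≤ δ/(2*‖g‖) := min_le_right _ _
          have h6 : min (T/2) (δ/(2*‖g‖)) * ‖g‖ ≤ (δ/(2*‖g‖)) * ‖g‖ := by nlinarith
          have h7 : (δ/(2*‖g‖)) * ‖g‖ = δ/2 := by field_simp
          linarith
        have hmem : (1+τ) • g ∈ Metric.ball g δ := by
          rw [Metric.mem_ball, dist_eq_norm]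
          have e1 : (1+τ) • g - g = τ • g := by module
          rw [e1, norm_smul, Real.norm_eq_abs, abs_of_pos hτ0]
          exact hτδ
        exact hcase τ hτ0 (hnorm τ hτ0 hτT) (hδball hmem)
      obtain ⟨φ, hφ⟩ := geometric_hahn_banach_open_point
        (hDconv.interior) isOpen_interior hgni
      have hφ0 : 0 < φ g := by
        have := hφ 0 h0int
        simpa using this
      have hφD : ∀ h ∈ D, φ h ≤ φ g := by
        intro h hh
        by_contra hlt
        push_neg at hlt
        have hφh : 0 < φ h := lt_trans hφ0 hlt
        obtain ⟨θ, hθ0, hθ1, hθgt⟩ : ∃ θ : ℝ, 0 < θ ∧ θ < 1 ∧ φ g < (1-θ) * φ h := by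
          refine ⟨(φ h - φ g)/(2*φ h), div_pos (by linarith) (by linarith), ?_, ?_⟩
          · rw [div_lt_one (by linarith)]
            linarith
          · have h9 : (1 - (φ h - φ g)/(2*φ h)) * φ h = φ h - (φ h - φ g)/2 := by
              field_simp
            rw [h9]
            linarith
        have hmem : θ • (0:E) + (1-θ) • h ∈ interior D :=
          Convex.combo_interior_closure_mem_interior hDconv h0int
            (subset_closure hh) hθ0 (by linarith) (by ring)
        rw [smul_zero, zero_add] at hmem
        have h8 := hφ _ hmem
        rw [map_smul, smul_eq_mul] at h8
        linarith
      set d : E := (InnerProductSpace.toDual ℝ E).symm φ with hd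
      have hdy : ∀ y : E, ⟪d, y⟫ = φ y := fun y =>
        InnerProductSpace.toDual_symm_apply
      have hKmem : ∀ lam : ℝ, 0 ≤ lam → xs + lam • d ∈ subdiffConj f g := by
        intro lam hlam p hp
        have h1 := hxsK g hgρ p hp
        have hp2D : p.2 ∈ D := ⟨p.1, by rintro _ ⟨y, rfl⟩; exact hp y⟩
        have h2 : ⟪d, p.2 - g⟫ ≤ 0 := by
          rw [inner_sub_right, hdy, hdy]
          have := hφD p.2 hp2D
          linarith
        have e : ⟪xs + lam • d, p.2 - g⟫ = ⟪xs, p.2 - g⟫ + lam * ⟪d, p.2 - g⟫ := by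
          rw [inner_add_left, real_inner_smul_left]
        rw [ge_iff_le, e]
        nlinarith
      have hnotb : ¬ BddAbove ((fun x => ⟪x, g⟫) '' subdiffConj f g) := by
        rintro ⟨M, hM⟩
        obtain ⟨lam, hlam0, hlam1⟩ : ∃ lam : ℝ, 0 ≤ lam ∧ M - ⟪xs, g⟫ + 1 ≤ lam * φ g := by
          refine ⟨max 0 ((M - ⟪xs, g⟫ + 1)/(φ g)), le_max_left _ _, ?_⟩
          have h5 : (M - ⟪xs, g⟫ + 1)/(φ g) ≤ max 0 ((M - ⟪xs, g⟫ + 1)/(φ g)) :=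
            le_max_right _ _
          rw [div_le_iff₀ hφ0] at h5
          linarith
        have hmem : ⟪xs + lam • d, g⟫ ≤ M :=
          hM (Set.mem_image_of_mem _ (hKmem lam hlam0))
        have e : ⟪xs + lam • d, g⟫ = ⟪xs, g⟫ + lam * φ g := by
          rw [inner_add_left, real_inner_smul_left, hdy]
        rw [e] at hmem
        linarith
      rw [dirDConj, Real.sSup_of_not_bddAbove hnotb, hc0]
  refine ⟨hdirg, hdir0, ?_⟩
  intro ξ' h1 h2
  rw [hdirg, hdir0] at h2
  linarith
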